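/- For the constant-phase product S_n(x) = (e^{iφσ_z} V(x))^n with V(x) = [[x, √(x²−1)],[√(x²−1), x]], the top-left entry P_n(x) satisfies, for x > sec φ: |P_n(x)|² ≥ T_n(x cos φ)², where T_n is the n-th Chebyshev polynomial; in particular |P_n(x)| grows at least exponentially in n for fixed x > sec φ. -/

import Mathlib

open Matrix Complex Polynomial

/-- The constant-phase SU(1,1) QSP iterate `e^{iφσ_z} V(x)`. -/
noncomputable def iterate15 (φ x : ℝ) : Matrix (Fin 2) (Fin 2) ℂ :=
  !![Complex.exp (Complex.I * φ), 0; 0, Complex.exp (-(Complex.I * φ))] *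
    !![(x : ℂ), (Real.sqrt (x ^ 2 - 1) : ℂ); (Real.sqrt (x ^ 2 - 1) : ℂ), (x : ℂ)]

/-- Chebyshev lower bound: `T n y ≥ (y + √(y²-1))^n / 2` for `y > 1`. -/
lemma cheb_lower (y : ℝ) (hy : 1 < y) (n : ℕ) :
    (y + Real.sqrt (y ^ 2 - 1)) ^ n / 2 ≤ (Polynomial.Chebyshev.T ℝ n).eval y := by
  set s := Real.sqrt (y ^ 2 - 1) with hs
  have hs2 : s ^ 2 = y ^ 2 - 1 := Real.sq_sqrt (by nlinarith)
  have hspos : 0 ≤ s := Real.sqrt_nonneg _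
  have hvpos : 0 < y - s := by nlinarith
  have key : ∀ n : ℕ, (Polynomial.Chebyshev.T ℝ n).eval y
      = ((y + s) ^ n + (y - s) ^ n) / 2 := by
    intro n
    induction n using Nat.twoStepInduction with
    | zero => simp [Polynomial.Chebyshev.T_zero]
    | one => simp [Polynomial.Chebyshev.T_one]
    | more n ih1 ih2 =>
      have hc : ((n + 2 : ℕ) : ℤ) = (n : ℤ) + 2 := by push_cast; ring
      have hrec := Polynomial.Chebyshev.T_add_two ℝ (n : ℤ)
      have := congrArg (Polynomial.eval y) hrec
      simp only [Polynomial.eval_sub, Polynomial.eval_mul, Polynomial.eval_ofNat,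
        Polynomial.eval_X] at this
      rw [hc, this]
      have hc1 : ((n + 1 : ℕ) : ℤ) = (n : ℤ) + 1 := by push_cast; ring
      rw [hc1] at ih2
      rw [ih1, ih2]
      have hu : (y+s)^2 = 2*y*(y+s) - 1 := by nlinarith [hs2]
      have hv : (y-s)^2 = 2*y*(y-s) - 1 := by nlinarith [hs2]
      linear_combination ((y+s)^n/2)*hu + ((y-s)^n/2)*hv - ((y+s)^n + (y-s)^n) * hs2
  rw [key n]
  have : 0 ≤ (y - s) ^ n := le_of_lt (pow_pos hvpos n)
  linarith

/-- The square of the iterate satisfies the Cayley–Hamilton type relation. -/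
lemma iter_sq (e : ℂ) (s x c : ℝ) (hs2 : s^2 = x^2-1) (hee : e * e⁻¹ = 1)
    (hy : e + e⁻¹ = 2 * c) :
    (!![e * x, e * s; e⁻¹ * s, e⁻¹ * x] : Matrix (Fin 2) (Fin 2) ℂ) ^ 2
      = ((2 * (x * c) : ℝ) : ℂ) • !![e * (x:ℂ), e * s; e⁻¹ * s, e⁻¹ * x] - 1 := by
  have hs2' : (s:ℂ)^2 = (x:ℂ)^2 - 1 := by exact_mod_cast congrArg (Complex.ofReal) hs2
  rw [pow_two]
  ext i j
  fin_cases i <;> fin_cases j <;>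
    simp [Matrix.mul_apply, Fin.sum_univ_two, Matrix.one_apply, Matrix.smul_apply] <;>
    first
    | linear_combination e * (x:ℂ)^2 * hy + ((s:ℂ)^2 - (x:ℂ)^2) * hee + hs2'
    | linear_combination e * (x:ℂ) * (s:ℂ) * hy
    | linear_combination e⁻¹ * (x:ℂ) * (s:ℂ) * hy
    | linear_combination e⁻¹ * (x:ℂ)^2 * hy + ((s:ℂ)^2 - (x:ℂ)^2) * hee + hs2'

/-- Power formula via Chebyshev U for a matrix satisfying `M² = 2y·M - 1`. -/
lemma pow_formula (M : Matrix (Fin 2) (Fin 2) ℂ) (y : ℝ)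
    (hM : M ^ 2 = ((2 * y : ℝ) : ℂ) • M - 1) (n : ℕ) :
    M ^ n = (((Polynomial.Chebyshev.U ℝ ((n:ℤ) - 1)).eval y : ℝ) : ℂ) • M
      - (((Polynomial.Chebyshev.U ℝ ((n:ℤ) - 2)).eval y : ℝ) : ℂ) • 1 := by
  induction n with
  | zero =>
    norm_num [Polynomial.Chebyshev.U_neg_one, Polynomial.Chebyshev.U_neg_two]
  | succ n ih =>
    have hrec := congrArg (Polynomial.eval y) (Polynomial.Chebyshev.U_add_one ℝ ((n:ℤ) - 1))
    simp only [Polynomial.eval_sub, Polynomial.eval_mul, Polynomial.eval_ofNat,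
      Polynomial.eval_X] at hrec
    have hc1 : ((n:ℤ) - 1 + 1) = (((n+1:ℕ)):ℤ) - 1 := by push_cast; ring
    have hc2 : ((n:ℤ) - 1 - 1) = ((n:ℤ) - 2) := by ring
    rw [hc1, hc2] at hrec
    rw [pow_succ, ih, sub_mul, smul_mul_assoc, smul_mul_assoc, one_mul, ← pow_two, hM,
      hrec]
    push_cast
    ext i j
    simp [Matrix.sub_apply, Matrix.smul_apply, Matrix.one_apply]
    split_ifs <;> ring

/-- For `x > sec φ`, the top-left entry `P_n` of the constant-phase product grows
at least as fast as the Chebyshev polynomial `T_n(x cos φ)`; in particular it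
grows at least exponentially in `n`. -/
theorem constant_phase_growth (φ x : ℝ) (n : ℕ) (hφ : φ ∈ Set.Ioo 0 (Real.pi / 2))
    (hx : 1 / Real.cos φ < x) :
    ((Polynomial.Chebyshev.T ℝ n).eval (x * Real.cos φ)) ^ 2 ≤
      Complex.normSq (((iterate15 φ x) ^ n) 0 0) ∧
    (x * Real.cos φ + Real.sqrt ((x * Real.cos φ) ^ 2 - 1)) ^ n / 2 ≤
      (Polynomial.Chebyshev.T ℝ n).eval (x * Real.cos φ) := by
  obtain ⟨hφ0, hφ2⟩ := hφ
  have hcos : 0 < Real.cos φ := Real.cos_pos_of_mem_Ioo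
    ⟨by linarith [Real.pi_pos], hφ2⟩
  have hcos1 : Real.cos φ ≤ 1 := Real.cos_le_one φ
  have hy1 : 1 < x * Real.cos φ := by
    rw [div_lt_iff₀ hcos] at hx
    linarith
  have hx1 : 1 < x := by nlinarith
  set y := x * Real.cos φ with hydef
  set s := Real.sqrt (x ^ 2 - 1) with hsdef
  have hs2 : s ^ 2 = x ^ 2 - 1 := Real.sq_sqrt (by nlinarith)
  set e : ℂ := Complex.exp (Complex.I * φ) with hedef
  have hM : iterate15 φ x = !![e * x, e * s; e⁻¹ * s, e⁻¹ * x] := by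
    rw [iterate15]
    have : Complex.exp (-(Complex.I * φ)) = e⁻¹ := by rw [hedef, ← Complex.exp_neg]
    rw [this]
    ext i j
    fin_cases i <;> fin_cases j <;> simp [Matrix.mul_apply, Fin.sum_univ_two, hedef, hsdef]
  have hee : e * e⁻¹ = 1 := by
    rw [hedef]; field_simp
  have heI : e = Real.cos φ + Real.sin φ * Complex.I := by
    rw [hedef, show Complex.I * (φ:ℂ) = (φ:ℂ) * Complex.I by ring, Complex.exp_mul_I]
    push_cast; ring
  have heIinv : e⁻¹ = Real.cos φ - Real.sin φ * Complex.I := by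
    rw [hedef, ← Complex.exp_neg,
      show -(Complex.I * (φ:ℂ)) = ((-φ:ℝ):ℂ) * Complex.I by push_cast; ring,
      Complex.exp_mul_I]
    push_cast
    simp [Real.cos_neg, Real.sin_neg]
    ring
  have hyc : e + e⁻¹ = 2 * Real.cos φ := by
    rw [heIinv, heI]; push_cast; ring
  have hsq : (iterate15 φ x) ^ 2 = ((2 * y : ℝ) : ℂ) • (iterate15 φ x) - 1 := by
    rw [hM, hydef]
    exact iter_sq e s x (Real.cos φ) hs2 hee hyc
  have hpow := pow_formula (iterate15 φ x) y hsq n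
  set a : ℝ := (Polynomial.Chebyshev.U ℝ ((n:ℤ) - 1)).eval y with hadef
  set b : ℝ := (Polynomial.Chebyshev.U ℝ ((n:ℤ) - 2)).eval y with hbdef
  have hentry : ((iterate15 φ x) ^ n) 0 0 = (a : ℂ) * (e * x) - (b : ℂ) := by
    rw [hpow, hM]
    simp [Matrix.sub_apply, Matrix.smul_apply, Matrix.one_apply]
  -- T n y = y * a - b
  have hT : (Polynomial.Chebyshev.T ℝ n).eval y = y * a - b := by
    have h1 := Polynomial.Chebyshev.T_eq_U_sub_X_mul_U ℝ (n:ℤ)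
    have h2 := Polynomial.Chebyshev.U_eq ℝ (n:ℤ)
    have := congrArg (Polynomial.eval y) (by
      linear_combination h1 + h2 : Polynomial.Chebyshev.T ℝ (n:ℤ)
        = 2 * Polynomial.X * Polynomial.Chebyshev.U ℝ ((n:ℤ)-1)
          - Polynomial.Chebyshev.U ℝ ((n:ℤ)-2)
          - Polynomial.X * Polynomial.Chebyshev.U ℝ ((n:ℤ)-1))
    simp only [Polynomial.eval_sub, Polynomial.eval_mul, Polynomial.eval_ofNat,
      Polynomial.eval_X] at this
    rw [this, ← hadef, ← hbdef]
    ring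
  constructor
  · rw [hentry, heI]
    have hre : ((a : ℂ) * ((Real.cos φ + Real.sin φ * Complex.I) * x) - (b : ℂ))
        = (((a * x * Real.cos φ - b : ℝ)) : ℂ) + ((a * x * Real.sin φ : ℝ) : ℂ) * Complex.I := by
      push_cast; ring
    rw [hre, Complex.normSq_add_mul_I]
    have hTa : (Polynomial.Chebyshev.T ℝ n).eval y = a * x * Real.cos φ - b := by
      rw [hT, hydef]; ring
    rw [hTa]
    nlinarith [sq_nonneg (a * x * Real.sin φ)]
  · exact cheb_lower y hy1 n
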